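/- Any solution X of the discrete Riccati equation X(pt) = (1 - p a_2^{-1} t)/(X(t) + a_2 t) satisfies the symmetric q-P(A_4^{(1)}) equation (X(pt) X(t) - 1)(X(t) X(p^{-1}t) - 1) = t^2 (X(t) + a_1)(X(t) + a_1^{-1})/(X(t) + a_2 t) provided a_1 = p^{-1} a_2^2. -/

import Mathlib

/-- Any solution `X` of the discrete Riccati equation `X(pt) = (1 - p a₂⁻¹ t)/(X(t) + a₂ t)`
satisfies the symmetric q-P(A₄⁽¹⁾) equation
`(X(pt)X(t) - 1)(X(t)X(p⁻¹t) - 1) = t² (X(t)+a₁)(X(t)+a₁⁻¹)/(X(t)+a₂ t)`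
provided `a₁ = p⁻¹ a₂²`. -/
theorem symQPA4_of_riccati (p a1 a2 : ℂ) (hp : p ≠ 0) (ha2 : a2 ≠ 0) (X : ℂ → ℂ)
    (hden : ∀ t, X t + a2 * t ≠ 0)
    (hRic : ∀ t, X (p * t) = (1 - p * a2⁻¹ * t) / (X t + a2 * t))
    (ha1 : a1 = p⁻¹ * a2 ^ 2) :
    ∀ t, (X (p * t) * X t - 1) * (X t * X (p⁻¹ * t) - 1)
      = t ^ 2 * (X t + a1) * (X t + a1⁻¹) / (X t + a2 * t) := by
  intro t
  have hd1 := hden t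
  have hd2 := hden (p⁻¹ * t)
  subst ha1
  have hA : X (p * t) * X t - 1
      = -t * (p * a2⁻¹) * (X t + p⁻¹ * a2 ^ 2) / (X t + a2 * t) := by
    rw [hRic t]
    field_simp
    ring
  have h2 : X t * (X (p⁻¹ * t) + a2 * (p⁻¹ * t)) = 1 - p * a2⁻¹ * (p⁻¹ * t) := by
    have := hRic (p⁻¹ * t)
    rw [show p * (p⁻¹ * t) = t by field_simp] at this
    rw [this, div_mul_cancel₀ _ hd2]
  have hB : X t * X (p⁻¹ * t) - 1 = -t * (a2 * p⁻¹) * (X t + (p⁻¹ * a2 ^ 2)⁻¹) := by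
    have expand : X t * X (p⁻¹ * t)
        = 1 - p * a2⁻¹ * (p⁻¹ * t) - X t * (a2 * (p⁻¹ * t)) := by
      linear_combination h2
    rw [expand]
    field_simp
    ring
  rw [hA, hB, div_mul_eq_mul_div]
  congr 1
  field_simp
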